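/- For any bounded measurable f : X → ℝ and g(x,s,y) := 1{s=0}f(x) + 1{s=1}f(y), the action of the occlusion kernel reduces to the action of K on the averaged function: K_occ g(x,s,y) = K f_α(x) for all (x,s,y), where f_α(x) := (1 − α(ρ(x)))f(x) + α(ρ(x))→Pf(x). Consequently K_occ^t g(x,s,y) = K^t f_α(x) for all t ≥ 1, and P_occ(g) = P(f_α). -/

import Mathlib

open MeasureTheory ProbabilityTheory Filter

noncomputable section

namespace OcclusionPaper

variable {X : Type*} [MeasurableSpace X]

/-- The mean `μ_i = P_i(f)` of `f` under `P_i`, i.e. `P` conditioned to the region `A i`. -/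
def regionMean (P : Measure X) {R : ℕ} (A : Fin R → Set X) (f : X → ℝ) (i : Fin R) : ℝ :=
  ∫ x, f x ∂(P[|A i])

/-- The resolution `→Pf(x) = ∑ i, μ_i 1{x ∈ A i}`. -/
def res (P : Measure X) {R : ℕ} (A : Fin R → Set X) (f : X → ℝ) : X → ℝ :=
  fun x => ∑ i, Set.indicator (A i) (fun _ => regionMean P A f i) x

/-- The orthogonal counterpart `←Pf = f − →Pf`. -/
def orth (P : Measure X) {R : ℕ} (A : Fin R → Set X) (f : X → ℝ) : X → ℝ :=
  fun x => f x - res P A f x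

/-- Covariance of `g` and `h` under `P`. -/
def covP {Y : Type*} [MeasurableSpace Y] (P : Measure Y) (g h : Y → ℝ) : ℝ :=
  (∫ y, g y * h y ∂P) - (∫ y, g y ∂P) * (∫ y, h y ∂P)

/-- Action of the `k`-th iterate of a (measure-valued) transition kernel on a function:
`K^k g`. -/
def kerIter {Y : Type*} [MeasurableSpace Y] (κ : Y → Measure Y) : ℕ → (Y → ℝ) → Y → ℝ
  | 0, g => g
  | (k + 1), g => fun y => ∫ z, kerIter κ k g z ∂(κ y)

/-- The joint law of the first `n` steps `(X_1, …, X_n)` of a Markov chain with initial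
distribution `μ` and transition kernel `κ`. -/
def chainLawF {Y : Type*} [MeasurableSpace Y] (μ : Measure Y) (κ : Y → Measure Y) :
    (n : ℕ) → Measure (Fin n → Y)
  | 0 => Measure.dirac (fun i : Fin 0 => i.elim0)
  | 1 => μ.map (fun x _ => x)
  | (n + 2) => (chainLawF μ κ (n + 1)).bind
      (fun xs => (κ (xs (Fin.last n))).map (fun z => Fin.snoc xs z))

/-- The distribution `μ K^t` of a Markov chain with kernel `κ` after `t` steps from `μ`. -/
def evolveF {Y : Type*} [MeasurableSpace Y] (κ : Y → Measure Y) (μ : Measure Y) : ℕ → Measure Y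
  | 0 => μ
  | (t + 1) => (evolveF κ μ t).bind κ

/-- `N_i`: the number of times the finite trajectory `xs` visits region `A i`. -/
def Nreg {R n : ℕ} (A : Fin R → Set X) (xs : Fin n → X) (i : Fin R) : ℕ :=
  ∑ t : Fin n, Set.indicator (A i) (fun _ => (1 : ℕ)) (xs t)

/-- The fully occluded (ideal) estimator
`μ̂_ideal = n⁻¹ ∑_{i=1}^R ∑_{j=1}^{N_i} f(Y_{ij})`, evaluated on an outcome consisting of the
chain trajectory together with, for each region, an array of draws from `P_i`. -/
def idealEst {R n : ℕ} (A : Fin R → Set X) (f : X → ℝ)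
    (ω : (Fin n → X) × (Fin R → Fin n → X)) : ℝ :=
  (n : ℝ)⁻¹ * ∑ i : Fin R, ∑ j : Fin n, if (j : ℕ) < Nreg A ω.1 i then f (ω.2 i j) else 0

/-- The joint law of the chain `(X_1,…,X_n)` together with, for each region `i`, an i.i.d.
array `(Y_{ij})_j` of draws from `P_i`, independent of the chain (hence in particular
conditionally independent of it given the visited regions). -/
def jointLaw (P : Measure X) {R : ℕ} (A : Fin R → Set X) (κ : X → Measure X) (n : ℕ) :
    Measure ((Fin n → X) × (Fin R → Fin n → X)) :=
  (chainLawF P κ n).prod (Measure.pi fun i => Measure.pi fun _ : Fin n => P[|A i])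

/-- Bernoulli distribution on `Bool` with success probability `p` (`true` has mass `p`). -/
def bern (p : ℝ) : Measure Bool :=
  ENNReal.ofReal p • Measure.dirac true + ENNReal.ofReal (1 - p) • Measure.dirac false

/-- The conditional law of the pair `(s, y)` given the current chain position `x`:
`s ~ Bernoulli(α(ρ x))` and `y ~ P_{ρ x}` independently. -/
def mark (P : Measure X) {R : ℕ} (A : Fin R → Set X) (ρ : X → Fin R) (α : Fin R → ℝ) (x : X) :
    Measure (Bool × X) :=
  (bern (α (ρ x))).prod (P[|A (ρ x)])

/-- The occlusion kernel `K_occ((x,s,y) → (dx',s',dy'))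
 = K(x → dx')·(α(ρ x')1{s'=1} + (1−α(ρ x'))1{s'=0})·P_{ρ x'}(dy')`. -/
def Kocc (P : Measure X) {R : ℕ} (A : Fin R → Set X) (ρ : X → Fin R) (α : Fin R → ℝ)
    (κ : X → Measure X) : X × Bool × X → Measure (X × Bool × X) :=
  fun z => (κ z.1).bind fun x' => (mark P A ρ α x').map fun sy => (x', sy.1, sy.2)

/-- The measure `P_occ(dx,s,dy) = P(dx)·(α(ρ x)1{s=1} + (1−α(ρ x))1{s=0})·P_{ρ x}(dy)`. -/
def Pocc (P : Measure X) {R : ℕ} (A : Fin R → Set X) (ρ : X → Fin R) (α : Fin R → ℝ) :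
    Measure (X × Bool × X) :=
  P.bind fun x => (mark P A ρ α x).map fun sy => (x, sy.1, sy.2)

/-- `f_occ(x,s,y) = 1{s=0} f(x) + 1{s=1} f(y)`. -/
def focc (f : X → ℝ) : X × Bool × X → ℝ :=
  fun z => if z.2.1 then f z.2.2 else f z.1

/-- `f_α(x) = (1 − α(ρ x)) f(x) + α(ρ x) →Pf(x)`. -/
def falpha (P : Measure X) {R : ℕ} (A : Fin R → Set X) (ρ : X → Fin R) (α : Fin R → ℝ)
    (f : X → ℝ) : X → ℝ :=
  fun x => (1 - α (ρ x)) * f x + α (ρ x) * res P A f x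

/-- `f_a(x) = (1 − α(ρ x)) f(x)`. -/
def fa {R : ℕ} (ρ : X → Fin R) (α : Fin R → ℝ) (f : X → ℝ) : X → ℝ :=
  fun x => (1 - α (ρ x)) * f x

end OcclusionPaper

namespace OcclusionPaper

section AuxLemmas
set_option linter.unusedSectionVars false

variable {X : Type*} [MeasurableSpace X]

lemma bern_prob {p : ℝ} (h0 : 0 ≤ p) (h1 : p ≤ 1) : IsProbabilityMeasure (bern p) := by
  constructor
  simp [bern, ← ENNReal.ofReal_add h0 (by linarith : (0:ℝ) ≤ 1 - p)]

lemma integral_bern {p : ℝ} (h0 : 0 ≤ p) (h1 : p ≤ 1) (G : Bool → ℝ) :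
    ∫ b, G b ∂(bern p) = p * G true + (1 - p) * G false := by
  have h1' : (0:ℝ) ≤ 1 - p := by linarith
  have hfin1 : IsFiniteMeasure (ENNReal.ofReal p • (Measure.dirac true : Measure Bool)) :=
    ⟨by simp [ENNReal.ofReal_lt_top]⟩
  have hfin2 : IsFiniteMeasure (ENNReal.ofReal (1-p) • (Measure.dirac false : Measure Bool)) :=
    ⟨by simp [ENNReal.ofReal_lt_top]⟩
  rw [bern, integral_add_measure .of_finite .of_finite,
    integral_smul_measure, integral_smul_measure, integral_dirac, integral_dirac,
    ENNReal.toReal_ofReal h0, ENNReal.toReal_ofReal h1', smul_eq_mul, smul_eq_mul]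

lemma integral_bern_prod {Y : Type*} [MeasurableSpace Y] {p : ℝ} (h0 : 0 ≤ p) (h1 : p ≤ 1)
    (ν : Measure Y) [IsProbabilityMeasure ν] (h : Bool × Y → ℝ) (hm : Measurable h)
    (C : ℝ) (hbd : ∀ z, |h z| ≤ C) :
    ∫ z, h z ∂((bern p).prod ν) = p * ∫ y, h (true, y) ∂ν + (1 - p) * ∫ y, h (false, y) ∂ν := by
  haveI := bern_prob h0 h1
  have hint : Integrable h ((bern p).prod ν) :=
    Integrable.mono' (integrable_const C) hm.aestronglyMeasurable
      (Filter.Eventually.of_forall fun z => by simpa using hbd z)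
  rw [integral_prod _ hint, integral_bern h0 h1]

/-- Bochner integral against a bind, for bounded measurable integrands. -/
lemma integral_bind' {α β : Type*} [MeasurableSpace α] [MeasurableSpace β]
    (μ : Measure α) [IsProbabilityMeasure μ] (F : α → Measure β) (hF : Measurable F)
    (hFp : ∀ a, IsProbabilityMeasure (F a)) (g : β → ℝ) (hg : Measurable g)
    (C : ℝ) (hbd : ∀ y, |g y| ≤ C) :
    ∫ y, g y ∂(μ.bind F) = ∫ a, ∫ y, g y ∂(F a) ∂μ := by
  let κ : Kernel α β := ⟨F, hF⟩
  haveI : IsMarkovKernel κ := ⟨hFp⟩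
  have hbind : μ.bind F = (μ ⊗ₘ κ).map Prod.snd := by
    ext s hs
    rw [Measure.bind_apply hs hF.aemeasurable, Measure.map_apply measurable_snd hs,
      Measure.compProd_apply (measurable_snd hs)]
    rfl
  rw [hbind, integral_map measurable_snd.aemeasurable hg.aestronglyMeasurable]
  have hint : Integrable (fun p : α × β => g p.2) (μ ⊗ₘ κ) :=
    Integrable.mono' (integrable_const C) (hg.comp measurable_snd).aestronglyMeasurable
      (Filter.Eventually.of_forall fun z => by simpa using hbd z.2)
  rw [Measure.integral_compProd hint]
  rfl

section Occ
variable (P : Measure X) [IsProbabilityMeasure P] {R : ℕ} (A : Fin R → Set X)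
  (ρ : X → Fin R) (α : Fin R → ℝ) (f : X → ℝ)

lemma measurable_focc (hfm : Measurable f) : Measurable (focc f) :=
  Measurable.ite (measurableSet_eq_fun (measurable_snd.fst) measurable_const)
    (hfm.comp measurable_snd.snd) (hfm.comp measurable_fst)

lemma abs_focc_le {C : ℝ} (hbd : ∀ x, |f x| ≤ C) (z : X × Bool × X) : |focc f z| ≤ C := by
  unfold focc; split <;> apply hbd

lemma res_apply (hdisj : Pairwise fun i j => Disjoint (A i) (A j)) (hρ : ∀ x, x ∈ A (ρ x))
    (x : X) : res P A f x = regionMean P A f (ρ x) := by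
  unfold res
  rw [Finset.sum_eq_single (ρ x)]
  · exact Set.indicator_of_mem (hρ x) _
  · intro j _ hj
    exact Set.indicator_of_notMem (fun hx => (hdisj hj).le_bot ⟨hx, hρ x⟩) _
  · simp

lemma abs_regionMean_le (hpos : ∀ i, 0 < P (A i)) {C : ℝ} (hbd : ∀ x, |f x| ≤ C) (i : Fin R) :
    |regionMean P A f i| ≤ C := by
  haveI : IsProbabilityMeasure (P[|A i]) := cond_isProbabilityMeasure (hpos i).ne'
  have := norm_integral_le_of_norm_le_const (μ := P[|A i]) (f := f) (C := C)
    (Filter.Eventually.of_forall fun x => by simpa using hbd x)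
  simpa [regionMean, measure_univ] using this

lemma abs_falpha_le (hdisj : Pairwise fun i j => Disjoint (A i) (A j)) (hρ : ∀ x, x ∈ A (ρ x))
    (hpos : ∀ i, 0 < P (A i)) (hα0 : ∀ i, 0 ≤ α i) (hα1 : ∀ i, α i ≤ 1)
    {C : ℝ} (hbd : ∀ x, |f x| ≤ C) (x : X) : |falpha P A ρ α f x| ≤ C := by
  have h1 := hbd x
  have h2 : |res P A f x| ≤ C := by
    rw [res_apply P A ρ f hdisj hρ]; exact abs_regionMean_le P A f hpos hbd _
  have ha0 := hα0 (ρ x); have ha1 := hα1 (ρ x)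
  unfold falpha
  calc |(1 - α (ρ x)) * f x + α (ρ x) * res P A f x|
      ≤ |(1 - α (ρ x)) * f x| + |α (ρ x) * res P A f x| := abs_add_le _ _
    _ = (1 - α (ρ x)) * |f x| + α (ρ x) * |res P A f x| := by
        rw [abs_mul, abs_mul, abs_of_nonneg (by linarith), abs_of_nonneg ha0]
    _ ≤ C := by nlinarith [abs_nonneg (f x), abs_nonneg (res P A f x)]

lemma measurable_res (hA : ∀ i, MeasurableSet (A i)) : Measurable (res P A f) :=
  Finset.measurable_sum _ fun i _ => measurable_const.indicator (hA i)

lemma measurable_falpha (hA : ∀ i, MeasurableSet (A i)) (hρm : Measurable ρ)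
    (hfm : Measurable f) : Measurable (falpha P A ρ α f) := by
  have hα : Measurable (fun x => α (ρ x)) := (measurable_of_countable α).comp hρm
  exact ((measurable_const.sub hα).mul hfm).add (hα.mul (measurable_res P A f hA))

/-- The one-step mark map `x ↦ law of (x, s, y)`. -/
def markmap : X → Measure (X × Bool × X) :=
  fun x => (mark P A ρ α x).map (fun sy : Bool × X => (x, sy.1, sy.2))

lemma markmap_prob (hpos : ∀ i, 0 < P (A i)) (hα0 : ∀ i, 0 ≤ α i) (hα1 : ∀ i, α i ≤ 1)
    (x : X) : IsProbabilityMeasure (markmap P A ρ α x) := by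
  haveI := bern_prob (hα0 (ρ x)) (hα1 (ρ x))
  haveI : IsProbabilityMeasure (P[|A (ρ x)]) := cond_isProbabilityMeasure (hpos (ρ x)).ne'
  haveI : IsProbabilityMeasure (mark P A ρ α x) := by unfold mark; infer_instance
  exact Measure.isProbabilityMeasure_map
    ((measurable_const.prodMk (measurable_fst.prodMk measurable_snd)).aemeasurable)

lemma measurable_markmap (hpos : ∀ i, 0 < P (A i)) (hα0 : ∀ i, 0 ≤ α i) (hα1 : ∀ i, α i ≤ 1)
    (hρm : Measurable ρ) : Measurable (markmap P A ρ α) := by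
  apply Measure.measurable_of_measurable_coe
  intro s hs
  have hcoe : ∀ x, markmap P A ρ α x s = mark P A ρ α x (Prod.mk x ⁻¹' s) := by
    intro x
    rw [markmap, Measure.map_apply
      (measurable_const.prodMk (measurable_fst.prodMk measurable_snd)) hs]
  simp only [hcoe]
  have : ∀ x, mark P A ρ α x (Prod.mk x ⁻¹' s)
      = ∑ i : Fin R, if ρ x = i then ((bern (α i)).prod (P[|A i])) (Prod.mk x ⁻¹' s) else 0 := by
    intro x
    rw [Finset.sum_ite_eq]
    simp [mark]
  simp only [this]
  apply Finset.measurable_sum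
  intro i _
  haveI := bern_prob (hα0 i) (hα1 i)
  haveI : IsProbabilityMeasure (P[|A i]) := cond_isProbabilityMeasure (hpos i).ne'
  exact Measurable.ite (hρm (measurableSet_singleton i))
    (measurable_measure_prodMk_left hs) measurable_const

lemma integral_markmap_focc (hdisj : Pairwise fun i j => Disjoint (A i) (A j))
    (hρ : ∀ x, x ∈ A (ρ x)) (hpos : ∀ i, 0 < P (A i))
    (hα0 : ∀ i, 0 ≤ α i) (hα1 : ∀ i, α i ≤ 1) (hfm : Measurable f)
    {C : ℝ} (hbd : ∀ x, |f x| ≤ C) (x' : X) :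
    ∫ w, focc f w ∂(markmap P A ρ α x') = falpha P A ρ α f x' := by
  haveI : IsProbabilityMeasure (P[|A (ρ x')]) := cond_isProbabilityMeasure (hpos (ρ x')).ne'
  rw [markmap, integral_map
    (measurable_const.prodMk (measurable_fst.prodMk measurable_snd)).aemeasurable
    (measurable_focc f hfm).aestronglyMeasurable]
  have : ∀ sy : Bool × X, focc f (x', sy.1, sy.2) = if sy.1 then f sy.2 else f x' := fun _ => rfl
  simp only [this]
  have hmh : Measurable fun sy : Bool × X => if sy.1 then f sy.2 else f x' :=
    Measurable.ite (measurableSet_eq_fun measurable_fst measurable_const)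
      (hfm.comp measurable_snd) measurable_const
  have hbh : ∀ z : Bool × X, |if z.1 then f z.2 else f x'| ≤ C := fun z => by
    split <;> [exact hbd _; exact hbd x']
  rw [mark, integral_bern_prod (hα0 (ρ x')) (hα1 (ρ x')) _ _ hmh C hbh]
  norm_num [integral_const, measure_univ]
  rw [falpha, res_apply P A ρ f hdisj hρ, regionMean]
  ring

lemma integral_markmap_fst (hpos : ∀ i, 0 < P (A i)) (hα0 : ∀ i, 0 ≤ α i) (hα1 : ∀ i, α i ≤ 1)
    (g : X → ℝ) (hg : Measurable g) (x' : X) :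
    ∫ w, g w.1 ∂(markmap P A ρ α x') = g x' := by
  haveI := bern_prob (hα0 (ρ x')) (hα1 (ρ x'))
  haveI : IsProbabilityMeasure (P[|A (ρ x')]) := cond_isProbabilityMeasure (hpos (ρ x')).ne'
  haveI : IsProbabilityMeasure (mark P A ρ α x') := by unfold mark; infer_instance
  have hm : Measurable fun w : X × Bool × X => g w.1 := hg.comp measurable_fst
  rw [markmap, integral_map
    (measurable_const.prodMk (measurable_fst.prodMk measurable_snd)).aemeasurable
    hm.aestronglyMeasurable]
  simp

end Occ

lemma kerIter_meas_bdd {Y : Type*} [MeasurableSpace Y] (K : Kernel Y Y) [IsMarkovKernel K]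
    (g : Y → ℝ) (hg : Measurable g) {C : ℝ} (hbd : ∀ x, |g x| ≤ C) (t : ℕ) :
    Measurable (kerIter (fun x => K x) t g) ∧ ∀ x, |kerIter (fun x => K x) t g x| ≤ C := by
  induction t with
  | zero => exact ⟨hg, hbd⟩
  | succ t ih =>
    constructor
    · have hsm : StronglyMeasurable
          (fun p : Y × Y => kerIter (fun x => K x) t g p.2) :=
        ih.1.stronglyMeasurable.comp_measurable measurable_snd
      exact (hsm.integral_kernel_prod_right' (κ := K)).measurable
    · intro x
      have := norm_integral_le_of_norm_le_const (μ := K x)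
        (f := kerIter (fun x => K x) t g) (C := C)
        (Filter.Eventually.of_forall fun z => by simpa using ih.2 z)
      simpa [kerIter, measure_univ] using this

end AuxLemmas


/-- For `g(x,s,y) = 1{s=0}f(x) + 1{s=1}f(y)` the action of the occlusion
kernel reduces to the action of `K` on `f_α`: `K_occ g = K f_α`, hence
`K_occ^t g = K^t f_α` for all `t ≥ 1`, and `P_occ(g) = P(f_α)`. -/
theorem Kocc_action_eq_K_falpha
    {X : Type*} [MeasurableSpace X]
    (P : Measure X) [IsProbabilityMeasure P] {R : ℕ} (A : Fin R → Set X)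
    (hA : ∀ i, MeasurableSet (A i))
    (hdisj : Pairwise fun i j => Disjoint (A i) (A j))
    (hcover : (⋃ i, A i) = Set.univ)
    (hpos : ∀ i, 0 < P (A i))
    (ρ : X → Fin R) (hρm : Measurable ρ) (hρ : ∀ x, x ∈ A (ρ x))
    (α : Fin R → ℝ) (hα0 : ∀ i, 0 ≤ α i) (hα1 : ∀ i, α i ≤ 1)
    (K : Kernel X X) [IsMarkovKernel K] (hK : K.Invariant P)
    (f : X → ℝ) (hfm : Measurable f) (hbd : ∃ C, ∀ x, |f x| ≤ C) :
    (∀ z : X × Bool × X,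
      (∫ w, focc f w ∂(Kocc P A ρ α (fun x => K x) z))
        = ∫ x', falpha P A ρ α f x' ∂(K z.1)) ∧
    (∀ t, 1 ≤ t → ∀ z : X × Bool × X,
      kerIter (Kocc P A ρ α (fun x => K x)) t (focc f) z
        = kerIter (fun x => K x) t (falpha P A ρ α f) z.1) ∧
    (∫ z, focc f z ∂(Pocc P A ρ α)) = ∫ x, falpha P A ρ α f x ∂P := by
  obtain ⟨C, hbd⟩ := hbd
  set F : X → Measure (X × Bool × X) := markmap P A ρ α with hFdef
  have hFm : Measurable F := measurable_markmap P A ρ α hpos hα0 hα1 hρm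
  have hFp : ∀ x, IsProbabilityMeasure (F x) := markmap_prob P A ρ α hpos hα0 hα1
  have hfoccm := measurable_focc f hfm
  have hfoccb := abs_focc_le f hbd
  have hfam : Measurable (falpha P A ρ α f) := measurable_falpha P A ρ α f hA hρm hfm
  have hfab : ∀ x, |falpha P A ρ α f x| ≤ C :=
    abs_falpha_le P A ρ α f hdisj hρ hpos hα0 hα1 hbd
  have step : ∀ z : X × Bool × X,
      (∫ w, focc f w ∂(Kocc P A ρ α (fun x => K x) z))
        = ∫ x', falpha P A ρ α f x' ∂(K z.1) := by
    intro z
    have hz : Kocc P A ρ α (fun x => K x) z = (K z.1).bind F := rfl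
    rw [hz, integral_bind' (K z.1) F hFm hFp (focc f) hfoccm C hfoccb]
    exact integral_congr_ae (Filter.Eventually.of_forall fun a =>
      integral_markmap_focc P A ρ α f hdisj hρ hpos hα0 hα1 hfm hbd a)
  have lift : ∀ (g : X → ℝ), Measurable g → (∀ x, |g x| ≤ C) → ∀ z : X × Bool × X,
      (∫ w, g w.1 ∂(Kocc P A ρ α (fun x => K x) z)) = ∫ x', g x' ∂(K z.1) := by
    intro g hg hgb z
    have hz : Kocc P A ρ α (fun x => K x) z = (K z.1).bind F := rfl
    have hm : Measurable fun w : X × Bool × X => g w.1 := hg.comp measurable_fst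
    rw [hz, integral_bind' (K z.1) F hFm hFp _ hm C (fun w => hgb w.1)]
    exact integral_congr_ae (Filter.Eventually.of_forall fun a =>
      integral_markmap_fst P A ρ α hpos hα0 hα1 g hg a)
  refine ⟨step, ?_, ?_⟩
  · intro t ht
    induction t, ht using Nat.le_induction with
    | base =>
      intro z
      have h1 : kerIter (Kocc P A ρ α (fun x => K x)) 1 (focc f) z
          = ∫ w, focc f w ∂(Kocc P A ρ α (fun x => K x) z) := rfl
      have h2 : kerIter (fun x => (K x : Measure X)) 1 (falpha P A ρ α f) z.1
          = ∫ x', falpha P A ρ α f x' ∂(K z.1) := rfl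
      rw [h1, h2, step z]
    | succ t ht ih =>
      intro z
      obtain ⟨hkm, hkb⟩ := kerIter_meas_bdd K (falpha P A ρ α f) hfam hfab t
      have h1 : kerIter (Kocc P A ρ α (fun x => K x)) (t+1) (focc f) z
          = ∫ w, kerIter (Kocc P A ρ α (fun x => K x)) t (focc f) w
              ∂(Kocc P A ρ α (fun x => K x) z) := rfl
      have h2 : kerIter (fun x => (K x : Measure X)) (t+1) (falpha P A ρ α f) z.1
          = ∫ x', kerIter (fun x => (K x : Measure X)) t (falpha P A ρ α f) x' ∂(K z.1) := rfl
      rw [h1, h2]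
      have hiw : ∀ w : X × Bool × X, kerIter (Kocc P A ρ α (fun x => K x)) t (focc f) w
          = kerIter (fun x => (K x : Measure X)) t (falpha P A ρ α f) w.1 := ih
      simp only [hiw]
      exact lift _ hkm hkb z
  · have hz : Pocc P A ρ α = P.bind F := rfl
    rw [hz, integral_bind' P F hFm hFp (focc f) hfoccm C hfoccb]
    exact integral_congr_ae (Filter.Eventually.of_forall fun a =>
      integral_markmap_focc P A ρ α f hdisj hρ hpos hα0 hα1 hfm hbd a)


end OcclusionPaper
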